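/- Let M be a pseudo-unimodular square integer matrix (the product of its nonzero complex eigenvalues, with multiplicity, is ±1). Then Δ_M = {w ∈ ℚ^d : ∃n, w M^n ∈ ℤ^d} equals ℤ^d + E_0, where E_0 is the generalized left-eigenspace of M over ℚ for eigenvalue 0. -/
import Mathlib


open Matrix

lemma castvm (d : ℕ) (v : Fin d → ℤ) (P : Matrix (Fin d) (Fin d) ℤ) :
    (fun i => (((v ᵥ* P) i : ℤ) : ℚ)) = (fun i => ((v i : ℤ) : ℚ)) ᵥ* P.map (Int.cast : ℤ → ℚ) := by
  funext i
  simp [Matrix.vecMul, dotProduct, Matrix.map_apply]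

/-- For a pseudo-unimodular square integer matrix `M` (the product of its nonzero complex
eigenvalues, with multiplicities, is `±1`, i.e. the lowest nonzero coefficient of the
characteristic polynomial is `±1`), the set `Δ_M` of rational row vectors mapped into
`ℤ^d` by some power of `M` equals `ℤ^d + E₀`, where `E₀` is the generalized
left-eigenspace of `M` for the eigenvalue `0` over `ℚ`. -/
theorem deltaM_of_pseudoUnimodular
    (d : ℕ) (M : Matrix (Fin d) (Fin d) ℤ)
    (hpu : ∃ (k : ℕ) (q : Polynomial ℤ), M.charpoly = Polynomial.X ^ k * q ∧
      (q.coeff 0 = 1 ∨ q.coeff 0 = -1)) :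
    {w : Fin d → ℚ | ∃ n : ℕ, ∀ i, ∃ z : ℤ,
        (w ᵥ* ((M.map (Int.cast : ℤ → ℚ)) ^ n)) i = z} =
      {w : Fin d → ℚ | ∃ (z : Fin d → ℤ) (e : Fin d → ℚ),
        (∃ n : ℕ, e ᵥ* ((M.map (Int.cast : ℤ → ℚ)) ^ n) = 0) ∧
        w = (fun i => (z i : ℚ)) + e} := by
  obtain ⟨k, q, hq, hc⟩ := hpu
  set f : Matrix (Fin d) (Fin d) ℤ →+* Matrix (Fin d) (Fin d) ℚ :=
    (Int.castRingHom ℚ).mapMatrix with hf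
  have hfM : f M = M.map (Int.cast : ℤ → ℚ) := rfl
  set A : Matrix (Fin d) (Fin d) ℚ := M.map (Int.cast : ℤ → ℚ) with hA
  -- Cayley–Hamilton
  have hCH : Polynomial.aeval M M.charpoly = 0 := M.aeval_self_charpoly
  rw [hq, _root_.map_mul, map_pow, Polynomial.aeval_X] at hCH
  set B : Matrix (Fin d) (Fin d) ℤ := Polynomial.aeval M q.divX with hB
  have hBq : Polynomial.aeval M q = B * M + (q.coeff 0) • (1 : Matrix (Fin d) (Fin d) ℤ) := by
    conv_lhs => rw [← q.divX_mul_X_add]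
    simp [hB, Polynomial.aeval_C, Algebra.algebraMap_eq_smul_one]
  have hBM : B * M = M * B := by
    have h1 : Polynomial.aeval M (q.divX * Polynomial.X) =
        Polynomial.aeval M (Polynomial.X * q.divX) := by rw [mul_comm]
    rw [_root_.map_mul, _root_.map_mul, Polynomial.aeval_X] at h1
    exact h1
  set c : ℤ := q.coeff 0 with hcc
  set S : Matrix (Fin d) (Fin d) ℤ := (-c) • B with hS
  have hcsq : c * c = 1 := by rcases hc with h | h <;> rw [h] <;> norm_num
  have hkS : M ^ k = M ^ (k + 1) * S := by
    have h0 : M ^ k * (B * M + c • 1) = 0 := by rw [← hBq]; exact hCH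
    have h1 : M ^ (k + 1) * B + c • M ^ k = 0 := by
      rw [mul_add] at h0
      rw [← h0]
      congr 1
      · rw [hBM, pow_succ, mul_assoc]
      · rw [Matrix.mul_smul, mul_one]
    calc M ^ k = (c * c) • M ^ k := by rw [hcsq, one_smul]
    _ = c • (c • M ^ k) := by rw [smul_smul]
    _ = c • (-(M ^ (k + 1) * B)) := by rw [eq_neg_of_add_eq_zero_right h1]
    _ = M ^ (k + 1) * ((-c) • B) := by
        rw [Matrix.mul_smul]; rw [smul_neg, ← neg_smul]
  have hMS : M * S = S * M := by
    simp only [hS, Matrix.mul_smul, Matrix.smul_mul, hBM]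
  -- iterate: for all j m, M ^ (k + j) = M ^ (k + j + m) * S ^ m
  have hiter : ∀ j, M ^ (k + j) = M ^ (k + j + 1) * S := by
    intro j
    calc M ^ (k + j) = M ^ j * M ^ k := by rw [← pow_add, add_comm]
    _ = M ^ j * (M ^ (k + 1) * S) := by rw [hkS]
    _ = M ^ (k + j + 1) * S := by
        rw [← mul_assoc, ← pow_add]
        have : j + (k + 1) = k + j + 1 := by omega
        rw [this]
  have hiter2 : ∀ m j, M ^ (k + j) = M ^ (k + j + m) * S ^ m := by
    intro m
    induction m with
    | zero => intro j; simp
    | succ m ih =>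
        intro j
        calc M ^ (k + j) = M ^ (k + j + 1) * S := hiter j
        _ = M ^ (k + (j + 1) + m) * S ^ m * S := by
            rw [← ih (j + 1)]
            have : k + j + 1 = k + (j + 1) := by omega
            rw [this]
        _ = M ^ (k + j + (m + 1)) * S ^ (m + 1) := by
            rw [mul_assoc, ← pow_succ]
            have : k + (j + 1) + m = k + j + (m + 1) := by omega
            rw [this]
  ext w
  constructor
  · rintro ⟨n, hw⟩
    choose u hu using hw
    set N : ℕ := k + n with hN
    -- key identity over ℤ
    have hkey : M ^ N * S ^ N * M ^ N = M ^ N := by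
      have hcomm : S ^ N * M ^ N = M ^ N * S ^ N :=
        (Commute.pow_pow hMS.symm N N)
      rw [mul_assoc, hcomm, ← mul_assoc, ← pow_add]
      rw [← hiter2 N n]
    -- transfer to ℚ
    set T : Matrix (Fin d) (Fin d) ℚ := S.map (Int.cast : ℤ → ℚ) with hT
    have hpowA : ∀ m : ℕ, A ^ m = (M ^ m).map (Int.cast : ℤ → ℚ) :=
      fun m => (map_pow f M m).symm
    have hpowS : ∀ m : ℕ, T ^ m = (S ^ m).map (Int.cast : ℤ → ℚ) :=
      fun m => (map_pow f S m).symm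
    have hkeyQ : A ^ N * T ^ N * A ^ N = A ^ N := by
      have h := congrArg f hkey
      simp only [_root_.map_mul, map_pow] at h
      exact h
    have huw : (fun i => ((u i : ℤ) : ℚ)) = w ᵥ* A ^ n := by
      funext i; rw [← hu i]
    -- w ᵥ* A ^ N is the cast of an integer vector u'
    set u' : Fin d → ℤ := u ᵥ* M ^ k with hu'
    have hwN : w ᵥ* A ^ N = fun i => ((u' i : ℤ) : ℚ) := by
      calc w ᵥ* A ^ N = (w ᵥ* A ^ n) ᵥ* A ^ k := by
            rw [Matrix.vecMul_vecMul, ← pow_add, hN, add_comm]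
      _ = (fun i => ((u i : ℤ) : ℚ)) ᵥ* (M ^ k).map (Int.cast : ℤ → ℚ) := by
            rw [← huw, hpowA]
      _ = fun i => ((u' i : ℤ) : ℚ) := by rw [← castvm d u (M ^ k)]
    set z : Fin d → ℤ := u' ᵥ* S ^ N with hz
    refine ⟨z, w - fun i => ((z i : ℤ) : ℚ), ⟨N, ?_⟩, by ring⟩
    have hzA : (fun i => ((z i : ℤ) : ℚ)) ᵥ* A ^ N = w ᵥ* A ^ N := by
      calc (fun i => ((z i : ℤ) : ℚ)) ᵥ* A ^ N
          = ((fun i => ((u' i : ℤ) : ℚ)) ᵥ* (S ^ N).map (Int.cast : ℤ → ℚ)) ᵥ* A ^ N := by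
            rw [← castvm d u' (S ^ N)]
      _ = ((w ᵥ* A ^ N) ᵥ* T ^ N) ᵥ* A ^ N := by rw [← hwN, hpowS]
      _ = w ᵥ* (A ^ N * T ^ N * A ^ N) := by
            rw [Matrix.vecMul_vecMul, Matrix.vecMul_vecMul, mul_assoc]
      _ = w ᵥ* A ^ N := by rw [hkeyQ]
    rw [Matrix.sub_vecMul, hzA, sub_self]
  · rintro ⟨z, e, ⟨n, hn⟩, rfl⟩
    refine ⟨n, fun i => ⟨(z ᵥ* M ^ n) i, ?_⟩⟩
    have hpow : (A : Matrix (Fin d) (Fin d) ℚ) ^ n = (M ^ n).map (Int.cast : ℤ → ℚ) :=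
      (map_pow f M n).symm
    rw [Matrix.add_vecMul, hpow, ← castvm d z (M ^ n)]
    have : e ᵥ* (M ^ n).map (Int.cast : ℤ → ℚ) = 0 := by rw [← hpow]; exact hn
    rw [this]
    simp
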